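/- Let R be a commutative ring and let F ∈ R[X] be monic of degree N ≥ 1 such that the constant coefficient F.coeff 0 is a unit of R. If g ∈ R[X] satisfies ((g * h) %ₘ F).coeff 0 = 0 for every h ∈ R[X], then F divides g. (In other words, the pairing ⟨g, h⟩₀ = ((g h) mod F)(0) on R[X]/⟨F⟩ is non-degenerate.) -/

import Mathlib

open Polynomial

/-- For a monic `F` of degree `≥ 1` with unit constant coefficient, the pairing
`⟨g, h⟩₀ = ((g h) %ₘ F).coeff 0` on `R[X]/⟨F⟩` is non-degenerate: if
`((g * h) %ₘ F).coeff 0 = 0` for all `h`, then `F ∣ g`. -/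
theorem nondegenerate_zero_inner_product {R : Type*} [CommRing R] (F : R[X])
    (hF : F.Monic) (hN : 1 ≤ F.natDegree) (h0 : IsUnit (F.coeff 0)) (g : R[X])
    (hg : ∀ h : R[X], ((g * h) %ₘ F).coeff 0 = 0) :
    F ∣ g := by
  rcases subsingleton_or_nontrivial R with hs | hs
  · exact ⟨0, Subsingleton.elim _ _⟩
  obtain ⟨v, hv⟩ := h0
  -- `u` is an inverse of `X` modulo `F`
  set u : R[X] := -C ((v⁻¹ : Rˣ) : R) * F.divX with hu
  have hinv : C ((v⁻¹ : Rˣ) : R) * C (F.coeff 0) = 1 := by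
    rw [← C_mul, ← hv, ← C_1]
    congr 1
    exact_mod_cast v.inv_mul
  have hXu : F ∣ X * u - 1 := by
    refine ⟨-C ((v⁻¹ : Rˣ) : R), ?_⟩
    have hFe : X * F.divX + C (F.coeff 0) = F := X_mul_divX_add F
    linear_combination (-C ((v⁻¹ : Rˣ) : R)) * hFe + hinv
  have hmod : ∀ a b : R[X], F ∣ a - b → a %ₘ F = b %ₘ F := by
    intro a b hd
    have h1 : (a - b) %ₘ F = 0 := (modByMonic_eq_zero_iff_dvd hF).mpr hd
    rw [sub_modByMonic, sub_eq_zero] at h1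
    exact h1
  have aux : ∀ n : ℕ, ∀ p : R[X], p.natDegree ≤ n → p.degree < F.degree →
      (∀ h : R[X], ((p * h) %ₘ F).coeff 0 = 0) → p = 0 := by
    intro n
    induction n with
    | zero =>
      intro p hdeg hlt hp
      have hc : p.coeff 0 = 0 := by
        have := hp 1
        rwa [mul_one, (modByMonic_eq_self_iff hF).mpr hlt] at this
      rw [Polynomial.eq_C_of_natDegree_le_zero hdeg, hc, C_0]
    | succ n ih =>
      intro p hdeg hlt hp
      rcases eq_or_ne p 0 with rfl | hp0
      · rfl
      have hc : p.coeff 0 = 0 := by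
        have := hp 1
        rwa [mul_one, (modByMonic_eq_self_iff hF).mpr hlt] at this
      obtain ⟨d, hd, hdn, hddeg⟩ :
          ∃ d : R[X], p = X * d ∧ d.natDegree ≤ n ∧ d.degree < F.degree := by
        refine ⟨p.divX, ?_, ?_, lt_trans (degree_divX_lt hp0) hlt⟩
        · have := X_mul_divX_add p
          rw [hc, C_0, add_zero] at this
          exact this.symm
        · have := Polynomial.natDegree_divX_eq_natDegree_tsub_one (p := p)
          omega
      have hp' : ∀ h : R[X], ((d * h) %ₘ F).coeff 0 = 0 := by
        intro h
        have e : F ∣ d * h - p * (u * h) := by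
          have e2 : d * h - p * (u * h) = -(d * h) * (X * u - 1) := by
            rw [hd]; ring
          rw [e2]
          exact hXu.mul_left _
        rw [hmod _ _ e]
        exact hp (u * h)
      have hdx : d = 0 := ih d hdn hddeg hp'
      rw [hd, hdx, mul_zero]
  have hdvd : F ∣ g - g %ₘ F := by
    rw [modByMonic_eq_sub_mul_div g F]
    exact ⟨g /ₘ F, by ring⟩
  have hr : ∀ h : R[X], ((g %ₘ F * h) %ₘ F).coeff 0 = 0 := by
    intro h
    have e : F ∣ g %ₘ F * h - g * h := by
      have e2 : g %ₘ F * h - g * h = -h * (g - g %ₘ F) := by ring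
      rw [e2]; exact hdvd.mul_left _
    rw [hmod _ _ e]
    exact hg h
  have hz : g %ₘ F = 0 :=
    aux (g %ₘ F).natDegree _ le_rfl (degree_modByMonic_lt g hF) hr
  have : F ∣ g - g %ₘ F := hdvd
  rwa [hz, sub_zero] at this
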